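/- Let n ≥ 1, let S be a symmetric positive definite real n×n matrix, and let C ⊆ ℝⁿ be a nonempty closed convex set with 0 ∈ C. Then for every z ∈ ℝⁿ, ψ(z) = sup_{q ∈ C} ( ⟨z, q⟩ − ½ ⟨S⁻¹ q, q⟩ ), and this supremum is attained at a unique point of C. -/

import Mathlib

open Matrix
open scoped RealInnerProductSpace

noncomputable def hsupp {n : ℕ} (C : Set (EuclideanSpace ℝ (Fin n)))
    (z : EuclideanSpace ℝ (Fin n)) : EReal :=
  ⨆ q ∈ C, ((⟪q, z⟫ : ℝ) : EReal)

noncomputable def psi {n : ℕ} (S : Matrix (Fin n) (Fin n) ℝ)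
    (C : Set (EuclideanSpace ℝ (Fin n))) (z : EuclideanSpace ℝ (Fin n)) : EReal :=
  ⨅ z' : EuclideanSpace ℝ (Fin n),
    (((2⁻¹ * ⟪Matrix.toEuclideanLin S (z - z'), z - z'⟫ : ℝ) : EReal) + hsupp C z')

set_option maxHeartbeats 1000000 in
theorem stmt15 {n : ℕ} (hn : 1 ≤ n) (S : Matrix (Fin n) (Fin n) ℝ) (hS : S.PosDef)
    (C : Set (EuclideanSpace ℝ (Fin n))) (hCne : C.Nonempty) (hCcl : IsClosed C)
    (hCco : Convex ℝ C) (hC0 : (0 : EuclideanSpace ℝ (Fin n)) ∈ C)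
    (z : EuclideanSpace ℝ (Fin n)) :
    ∃! q₀ : EuclideanSpace ℝ (Fin n), q₀ ∈ C ∧
      IsGreatest
        ((fun q => ⟪z, q⟫ - 2⁻¹ * ⟪Matrix.toEuclideanLin S⁻¹ q, q⟫) '' C)
        (⟪z, q₀⟫ - 2⁻¹ * ⟪Matrix.toEuclideanLin S⁻¹ q₀, q₀⟫) ∧
      psi S C z = ((⟪z, q₀⟫ - 2⁻¹ * ⟪Matrix.toEuclideanLin S⁻¹ q₀, q₀⟫ : ℝ) : EReal) := by
  classical
  have hP : (S⁻¹).PosDef := hS.inv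
  set L : EuclideanSpace ℝ (Fin n) →ₗ[ℝ] EuclideanSpace ℝ (Fin n) :=
    Matrix.toEuclideanLin S⁻¹ with hLdef
  set LS : EuclideanSpace ℝ (Fin n) →ₗ[ℝ] EuclideanSpace ℝ (Fin n) :=
    Matrix.toEuclideanLin S with hLSdef
  set f : EuclideanSpace ℝ (Fin n) → ℝ := fun q => ⟪z, q⟫ - 2⁻¹ * ⟪L q, q⟫ with hfdef
  -- basic facts
  have hLpos : ∀ x : EuclideanSpace ℝ (Fin n), x ≠ 0 → 0 < ⟪L x, x⟫ := by
    intro x hx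
    have hx' : (WithLp.equiv 2 (Fin n → ℝ)) x ≠ 0 := by simpa using hx
    have h := hP.dotProduct_mulVec_pos hx'
    simpa [hLdef, PiLp.inner_apply, Matrix.toEuclideanLin_apply, dotProduct,
      mul_comm] using h
  have hLSnn : ∀ x : EuclideanSpace ℝ (Fin n), 0 ≤ ⟪LS x, x⟫ := by
    intro x
    have h := hS.posSemidef.dotProduct_mulVec_nonneg ((WithLp.equiv 2 (Fin n → ℝ)) x)
    simpa [hLSdef, PiLp.inner_apply, Matrix.toEuclideanLin_apply, dotProduct,
      mul_comm] using h
  have hLsym : ∀ x y : EuclideanSpace ℝ (Fin n), ⟪L x, y⟫ = ⟪x, L y⟫ :=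
    fun x y => (Matrix.isHermitian_iff_isSymmetric.mp hP.1) x y
  have hLSsym : ∀ x y : EuclideanSpace ℝ (Fin n), ⟪LS x, y⟫ = ⟪x, LS y⟫ :=
    fun x y => (Matrix.isHermitian_iff_isSymmetric.mp hS.1) x y
  have hSL : ∀ q : EuclideanSpace ℝ (Fin n), LS (L q) = q := by
    intro q
    have hinv : S * S⁻¹ = 1 := Matrix.mul_nonsing_inv S (isUnit_iff_ne_zero.mpr hS.det_pos.ne')
    simp [hLdef, hLSdef, Matrix.toEuclideanLin_apply, Matrix.mulVec_mulVec, hinv,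
      Matrix.one_mulVec]
  have hLcont : Continuous L := L.continuous_of_finiteDimensional
  -- eigenvalue lower bound
  obtain ⟨x₀, hx₀s, hx₀min⟩ : ∃ x₀ ∈ Metric.sphere (0:EuclideanSpace ℝ (Fin n)) 1,
      IsMinOn (fun x : EuclideanSpace ℝ (Fin n) => ⟪L x, x⟫)
        (Metric.sphere (0:EuclideanSpace ℝ (Fin n)) 1) x₀ := by
    have hne : (Metric.sphere (0:EuclideanSpace ℝ (Fin n)) 1).Nonempty := by
      refine ⟨EuclideanSpace.single ⟨0, hn⟩ (1:ℝ), ?_⟩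
      simp [EuclideanSpace.norm_single]
    exact (isCompact_sphere (0:EuclideanSpace ℝ (Fin n)) 1).exists_isMinOn hne
      ((hLcont.inner continuous_id).continuousOn)
  set μ : ℝ := ⟪L x₀, x₀⟫ with hμdef
  have hμpos : 0 < μ := hLpos x₀ (by
    intro h
    have h2 := mem_sphere_zero_iff_norm.mp hx₀s
    rw [h] at h2; simp at h2)
  have hμle : ∀ q : EuclideanSpace ℝ (Fin n), μ * ‖q‖ ^ 2 ≤ ⟪L q, q⟫ := by
    intro q
    rcases eq_or_ne q 0 with rfl | hq
    · simp
    · have hnq : (0:ℝ) < ‖q‖ := norm_pos_iff.mpr hq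
      have hmem : (‖q‖⁻¹ • q) ∈ Metric.sphere (0:EuclideanSpace ℝ (Fin n)) 1 := by
        simp [norm_smul, abs_of_pos (inv_pos.mpr hnq), inv_mul_cancel₀ hnq.ne']
      have h : μ ≤ ⟪L (‖q‖⁻¹ • q), ‖q‖⁻¹ • q⟫ := hx₀min hmem
      have hval : ⟪L (‖q‖⁻¹ • q), ‖q‖⁻¹ • q⟫ = ‖q‖⁻¹ * (‖q‖⁻¹ * ⟪L q, q⟫) := by
        rw [LinearMap.map_smul, real_inner_smul_left, real_inner_smul_right]
      rw [hval] at h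
      have h2 : μ * ‖q‖ ^ 2 ≤ ‖q‖⁻¹ * (‖q‖⁻¹ * ⟪L q, q⟫) * ‖q‖ ^ 2 := by
        nlinarith [h, sq_nonneg ‖q‖]
      have hid : ∀ A : ℝ, ‖q‖⁻¹ * (‖q‖⁻¹ * A) * ‖q‖ ^ 2 = A := by
        intro A; field_simp
      calc μ * ‖q‖ ^ 2 ≤ ‖q‖⁻¹ * (‖q‖⁻¹ * ⟪L q, q⟫) * ‖q‖ ^ 2 := h2
        _ = ⟪L q, q⟫ := hid _
  -- existence of a maximizer of f on C
  set R : ℝ := 2 * (‖z‖ + 1) / μ with hRdef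
  have hRpos : 0 < R := by positivity
  have hfcont : Continuous f := by
    have h1 : Continuous fun q : EuclideanSpace ℝ (Fin n) => ⟪z, q⟫ :=
      continuous_const.inner continuous_id
    have h2 : Continuous fun q : EuclideanSpace ℝ (Fin n) => ⟪L q, q⟫ :=
      hLcont.inner continuous_id
    exact h1.sub (continuous_const.mul h2)
  have hKcomp : IsCompact (C ∩ Metric.closedBall (0:EuclideanSpace ℝ (Fin n)) R) :=
    (isCompact_closedBall (0:EuclideanSpace ℝ (Fin n)) R).inter_left hCcl
  have h0K : (0:EuclideanSpace ℝ (Fin n)) ∈ C ∩ Metric.closedBall 0 R :=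
    ⟨hC0, by simp [hRpos.le]⟩
  obtain ⟨q₀, hq₀K, hq₀max⟩ := hKcomp.exists_isMaxOn ⟨0, h0K⟩ hfcont.continuousOn
  have hq₀C : q₀ ∈ C := hq₀K.1
  have hf0 : f 0 = 0 := by simp [hfdef]
  have hq₀0 : 0 ≤ f q₀ := by
    have h : f 0 ≤ f q₀ := hq₀max h0K
    rwa [hf0] at h
  have hglobal : ∀ q ∈ C, f q ≤ f q₀ := by
    intro q hq
    by_cases hqK : q ∈ Metric.closedBall (0:EuclideanSpace ℝ (Fin n)) R
    · exact hq₀max ⟨hq, hqK⟩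
    · have hnq : R < ‖q‖ := by
        by_contra h
        push_neg at h
        exact hqK (by simpa [Metric.mem_closedBall, dist_zero_right] using h)
      have h1 : ⟪z, q⟫ ≤ ‖z‖ * ‖q‖ := real_inner_le_norm z q
      have h2 : μ * ‖q‖ ^ 2 ≤ ⟪L q, q⟫ := hμle q
      have hfq : f q = ⟪z, q⟫ - 2⁻¹ * ⟪L q, q⟫ := rfl
      have h4 : ‖z‖ * ‖q‖ - 2⁻¹ * (μ * ‖q‖ ^ 2) ≤ 0 := by
        have hq0 : 0 < ‖q‖ := lt_trans hRpos hnq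
        have h5 : 2 * (‖z‖ + 1) < μ * ‖q‖ := by
          rw [hRdef] at hnq
          calc 2 * (‖z‖ + 1) = μ * (2 * (‖z‖ + 1) / μ) := by field_simp
            _ < μ * ‖q‖ := (mul_lt_mul_iff_right₀ hμpos).mpr hnq
        nlinarith [norm_nonneg z]
      have h5 : f q ≤ ‖z‖ * ‖q‖ - 2⁻¹ * (μ * ‖q‖ ^ 2) := by
        rw [hfq]; linarith
      exact le_trans h5 (le_trans h4 hq₀0)
  have hGreat : IsGreatest (f '' C) (f q₀) :=
    ⟨⟨q₀, hq₀C, rfl⟩, by rintro _ ⟨q, hq, rfl⟩; exact hglobal q hq⟩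
  -- first-order optimality
  have hopt : ∀ q ∈ C, ⟪q, z - L q₀⟫ ≤ ⟪q₀, z - L q₀⟫ := by
    intro q hq
    set d : EuclideanSpace ℝ (Fin n) := q - q₀ with hddef
    have expand : ∀ t : ℝ, f (q₀ + t • d)
        = f q₀ + t * (⟪z, d⟫ - ⟪L q₀, d⟫) - 2⁻¹ * t ^ 2 * ⟪L d, d⟫ := by
      intro t
      have h1 : ⟪L d, q₀⟫ = ⟪L q₀, d⟫ := by rw [hLsym d q₀, real_inner_comm]
      simp only [hfdef, map_add, LinearMap.map_smul, inner_add_left, inner_add_right,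
        real_inner_smul_left, real_inner_smul_right]
      rw [h1]; ring
    have hstep : ∀ t : ℝ, 0 < t → t ≤ 1 →
        ⟪z, d⟫ - ⟪L q₀, d⟫ ≤ 2⁻¹ * t * ⟪L d, d⟫ := by
      intro t ht0 ht1
      have hmem : q₀ + t • d ∈ C := by
        have h : (1 - t) • q₀ + t • q ∈ C := hCco hq₀C hq (by linarith) ht0.le (by ring)
        have heq : q₀ + t • d = (1 - t) • q₀ + t • q := by
          rw [hddef]; module
        rwa [heq]
      have h := hglobal _ hmem
      rw [expand t] at h
      have h' : t * (⟪z, d⟫ - ⟪L q₀, d⟫) ≤ t * (2⁻¹ * t * ⟪L d, d⟫) := by nlinarith [h]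
      exact le_of_mul_le_mul_left h' ht0
    have hc : 0 ≤ ⟪L d, d⟫ := by
      rcases eq_or_ne d 0 with h | h
      · rw [h]; simp
      · exact (hLpos d h).le
    have ha : ⟪z, d⟫ - ⟪L q₀, d⟫ ≤ 0 := by
      by_contra hlt
      push_neg at hlt
      have hc1 : (0:ℝ) < ⟪L d, d⟫ + 1 := by linarith
      have ht0 : 0 < min 1 ((⟪z, d⟫ - ⟪L q₀, d⟫) / (⟪L d, d⟫ + 1)) :=
        lt_min one_pos (div_pos hlt hc1)
      have ht := hstep _ ht0 (min_le_left _ _)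
      have htle : min 1 ((⟪z, d⟫ - ⟪L q₀, d⟫) / (⟪L d, d⟫ + 1)) * (⟪L d, d⟫ + 1)
          ≤ ⟪z, d⟫ - ⟪L q₀, d⟫ := by
        calc min 1 ((⟪z, d⟫ - ⟪L q₀, d⟫) / (⟪L d, d⟫ + 1)) * (⟪L d, d⟫ + 1)
            ≤ ((⟪z, d⟫ - ⟪L q₀, d⟫) / (⟪L d, d⟫ + 1)) * (⟪L d, d⟫ + 1) :=
              mul_le_mul_of_nonneg_right (min_le_right _ _) hc1.le
          _ = ⟪z, d⟫ - ⟪L q₀, d⟫ := div_mul_cancel₀ _ hc1.ne'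
      nlinarith [mul_nonneg ht0.le hc, ht, htle, ht0]
    have e1 : ⟪z, d⟫ = ⟪z, q⟫ - ⟪z, q₀⟫ := by rw [hddef, inner_sub_right]
    have e2 : ⟪L q₀, d⟫ = ⟪L q₀, q⟫ - ⟪L q₀, q₀⟫ := by rw [hddef, inner_sub_right]
    have e3 : ⟪q, z - L q₀⟫ = ⟪z, q⟫ - ⟪L q₀, q⟫ := by
      rw [inner_sub_right, real_inner_comm q z, real_inner_comm q (L q₀)]
    have e4 : ⟪q₀, z - L q₀⟫ = ⟪z, q₀⟫ - ⟪L q₀, q₀⟫ := by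
      rw [inner_sub_right, real_inner_comm q₀ z, real_inner_comm q₀ (L q₀)]
    linarith
  -- value of hsupp at the optimal z'
  have hsup_eq : hsupp C (z - L q₀) = ((⟪q₀, z - L q₀⟫ : ℝ) : EReal) := by
    apply le_antisymm
    · exact iSup₂_le fun q hq => EReal.coe_le_coe_iff.mpr (hopt q hq)
    · exact le_iSup₂ (f := fun q (_ : q ∈ C) => ((⟪q, z - L q₀⟫ : ℝ) : EReal)) q₀ hq₀C
  -- psi ≤ f q₀
  have hpsi_le : psi S C z ≤ ((f q₀ : ℝ) : EReal) := by
    have hle := iInf_le (fun z' : EuclideanSpace ℝ (Fin n) =>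
      (((2⁻¹ * ⟪Matrix.toEuclideanLin S (z - z'), z - z'⟫ : ℝ) : EReal) + hsupp C z'))
      (z - L q₀)
    refine le_trans hle ?_
    have hzz : z - (z - L q₀) = L q₀ := by abel
    rw [hzz, hsup_eq]
    have hreal : 2⁻¹ * ⟪LS (L q₀), L q₀⟫ + ⟪q₀, z - L q₀⟫ = f q₀ := by
      have e1 : ⟪LS (L q₀), L q₀⟫ = ⟪L q₀, q₀⟫ := by
        rw [hSL q₀]; exact real_inner_comm _ _
      have e2 : ⟪q₀, z - L q₀⟫ = ⟪z, q₀⟫ - ⟪L q₀, q₀⟫ := by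
        rw [inner_sub_right, real_inner_comm q₀ z, real_inner_comm q₀ (L q₀)]
      have hfq : f q₀ = ⟪z, q₀⟫ - 2⁻¹ * ⟪L q₀, q₀⟫ := rfl
      rw [e1, e2, hfq]; ring
    rw [← EReal.coe_add, hreal]
  -- psi ≥ f q₀
  have hpsi_ge : ((f q₀ : ℝ) : EReal) ≤ psi S C z := by
    refine le_iInf fun z' => ?_
    have key : f q₀ ≤ 2⁻¹ * ⟪LS (z - z'), z - z'⟫ + ⟪q₀, z'⟫ := by
      have hexpand : ∀ u v : EuclideanSpace ℝ (Fin n),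
          ⟪LS (u - v), u - v⟫ = ⟪LS u, u⟫ - ⟪LS u, v⟫ - ⟪LS v, u⟫ + ⟪LS v, v⟫ := by
        intro u v
        rw [map_sub, inner_sub_left, inner_sub_right, inner_sub_right]; ring
      have h0 : 0 ≤ ⟪LS (z - z' - L q₀), z - z' - L q₀⟫ := hLSnn _
      rw [hexpand (z - z') (L q₀)] at h0
      have e1 : ⟪LS (z - z'), L q₀⟫ = ⟪q₀, z - z'⟫ := by
        rw [hLSsym (z - z') (L q₀), hSL q₀]; exact real_inner_comm _ _
      have e2 : ⟪LS (L q₀), z - z'⟫ = ⟪q₀, z - z'⟫ := by rw [hSL q₀]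
      have e3 : ⟪LS (L q₀), L q₀⟫ = ⟪L q₀, q₀⟫ := by
        rw [hSL q₀]; exact real_inner_comm _ _
      rw [e1, e2, e3] at h0
      have e4 : ⟪q₀, z'⟫ = ⟪q₀, z⟫ - ⟪q₀, z - z'⟫ := by
        rw [← inner_sub_right]; congr 1; abel
      have e5 : ⟪q₀, z⟫ = ⟪z, q₀⟫ := real_inner_comm z q₀
      have hfq : f q₀ = ⟪z, q₀⟫ - 2⁻¹ * ⟪L q₀, q₀⟫ := rfl
      rw [hfq, e4, e5]
      linarith
    calc ((f q₀ : ℝ) : EReal)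
        ≤ ((2⁻¹ * ⟪LS (z - z'), z - z'⟫ + ⟪q₀, z'⟫ : ℝ) : EReal) :=
          EReal.coe_le_coe_iff.mpr key
      _ = ((2⁻¹ * ⟪LS (z - z'), z - z'⟫ : ℝ) : EReal) + ((⟪q₀, z'⟫ : ℝ) : EReal) :=
          EReal.coe_add _ _
      _ ≤ ((2⁻¹ * ⟪LS (z - z'), z - z'⟫ : ℝ) : EReal) + hsupp C z' := by
          gcongr
          exact le_iSup₂ (f := fun q (_ : q ∈ C) => ((⟪q, z'⟫ : ℝ) : EReal)) q₀ hq₀C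
  have hpsi : psi S C z = ((f q₀ : ℝ) : EReal) := le_antisymm hpsi_le hpsi_ge
  -- conclusion
  refine ⟨q₀, ⟨hq₀C, hGreat, hpsi⟩, ?_⟩
  rintro q₁ ⟨hq₁C, hq₁g, -⟩
  by_contra hne
  have hval : f q₁ = f q₀ := hq₁g.unique hGreat
  have hd : q₀ - q₁ ≠ 0 := sub_ne_zero.mpr (fun h => hne h.symm)
  have hdpos : 0 < ⟪L (q₀ - q₁), q₀ - q₁⟫ := hLpos _ hd
  have hmidC : (2⁻¹ : ℝ) • q₀ + (2⁻¹ : ℝ) • q₁ ∈ C :=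
    hCco hq₀C hq₁C (by norm_num) (by norm_num) (by norm_num)
  have hmidle : f ((2⁻¹ : ℝ) • q₀ + (2⁻¹ : ℝ) • q₁) ≤ f q₀ := hglobal _ hmidC
  have hmid : f ((2⁻¹ : ℝ) • q₀ + (2⁻¹ : ℝ) • q₁)
      = 2⁻¹ * f q₀ + 2⁻¹ * f q₁ + 8⁻¹ * ⟪L (q₀ - q₁), q₀ - q₁⟫ := by
    have h01 : ⟪L q₀, q₁⟫ = ⟪L q₁, q₀⟫ := by
      rw [hLsym q₀ q₁]; exact real_inner_comm _ _
    have hfq0 : f q₀ = ⟪z, q₀⟫ - 2⁻¹ * ⟪L q₀, q₀⟫ := rfl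
    have hfq1 : f q₁ = ⟪z, q₁⟫ - 2⁻¹ * ⟪L q₁, q₁⟫ := rfl
    simp only [hfdef, map_add, map_sub, LinearMap.map_smul, inner_add_left, inner_add_right,
      inner_sub_left, inner_sub_right, real_inner_smul_left, real_inner_smul_right]
    rw [h01]; ring
  rw [hval] at hmid
  linarith
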